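/- For random lattice permutations on the torus with parameter α ∈ ℝ: for every z = (z_1,…,z_d) ∈ T_L and i ∈ {1,…,d} with z_i odd, the two-point function satisfies G^{per}(o, z) ≤ G^{per}(o, z_i e_i), where G^{per}(x,y) = Z^{per}(x,y)/Z^{per}(∅). -/

import Mathlib

set_option linter.unusedSectionVars false
set_option maxHeartbeats 1000000


/-- Vertices of the torus `(ℤ/Lℤ)^d`. -/
abbrev TorusPt (d L : ℕ) := Fin d → ZMod L

/-- Nearest-neighbour adjacency on the torus: `x` and `y` differ by `±1 (mod L)`
in exactly one coordinate. -/
def torusAdj {d L : ℕ} (x y : TorusPt d L) : Prop :=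
  ∃ j : Fin d, y = Function.update x j (x j + 1) ∨ y = Function.update x j (x j - 1)

instance {d L : ℕ} (x y : TorusPt d L) : Decidable (torusAdj x y) := by
  unfold torusAdj; infer_instance

/-- The origin of the torus. -/
def torusOrigin (d L : ℕ) : TorusPt d L := fun _ => 0

/-- The partition function `Z^{per}(∅)` of random lattice permutations:
the sum of `exp(-α e(π))` over all permutations `π` of the vertex set such that every
vertex is either fixed or mapped to a nearest neighbour, where `e(π)` is the number of
non-fixed points of `π`. -/
noncomputable def Zperm0 (d L : ℕ) [NeZero L] (α : ℝ) : ℝ :=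
  ∑ π : Equiv.Perm (TorusPt d L),
    if ∀ z : TorusPt d L, π z = z ∨ torusAdj z (π z) then
      Real.exp (-α * ((Finset.univ.filter fun z : TorusPt d L => π z ≠ z).card : ℝ))
    else 0

/-- The partition function `Z^{per}(x,y)` of random lattice permutations with a walk
from `x` to `y`: the sum of `exp(-α e(π))` over all bijections
`π : V ∖ {y} → V ∖ {x}` such that every vertex in the domain is either fixed or mapped
to a nearest neighbour, where `e(π)` is the number of non-fixed points of `π`. -/
noncomputable def Zperm2 (d L : ℕ) [NeZero L] (α : ℝ) (x y : TorusPt d L) : ℝ :=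
  ∑ π : {z : TorusPt d L // z ≠ y} → {z : TorusPt d L // z ≠ x},
    if Function.Bijective π ∧
        ∀ z : {z : TorusPt d L // z ≠ y},
          (π z : TorusPt d L) = (z : TorusPt d L) ∨
            torusAdj (z : TorusPt d L) (π z : TorusPt d L) then
      Real.exp (-α *
        ((Finset.univ.filter
          fun z : {z : TorusPt d L // z ≠ y} =>
            (π z : TorusPt d L) ≠ (z : TorusPt d L)).card : ℝ))
    else 0


open Finset Function

namespace RLP

open scoped Classical

variable {V : Type*} [Fintype V] [DecidableEq V]

def movedSet (f : V → V) : Finset V := Finset.univ.filter (fun w => f w ≠ w)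

noncomputable def whalf (α : ℝ) (f : V → V) : ℝ := Real.exp (-α * ((movedSet f).card : ℝ))

def Qfull (E : V → V → Prop) (x y : V) (π : V → V) : Prop :=
  Function.Bijective π ∧ π y = x ∧ ∀ w, w ≠ y → π w = w ∨ E w (π w)

noncomputable def wfull (α : ℝ) (y : V) (π : V → V) : ℝ :=
  Real.exp (-α * ((Finset.univ.filter (fun w => w ≠ y ∧ π w ≠ w)).card : ℝ))

noncomputable def Zfull (α : ℝ) (E : V → V → Prop) (x y : V) : ℝ :=
  ∑ π ∈ Finset.univ.filter (Qfull E x y), wfull α y π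

structure Refl (E : V → V → Prop) (θ : V → V) (Bs : V → Prop) : Prop where
  symm : ∀ x y, E x y → E y x
  invol : ∀ x, θ (θ x) = x
  swap : ∀ x, Bs (θ x) ↔ ¬ Bs x
  adjm : ∀ x y, E x y → E (θ x) (θ y)
  cross : ∀ x y, E x y → Bs x → ¬ Bs y → y = θ x
  nofix : ∀ x, θ x ≠ x

namespace Refl

variable {E : V → V → Prop} {θ : V → V} {Bs : V → Prop}

theorem θinj (h : Refl E θ Bs) : Function.Injective θ := Function.LeftInverse.injective h.invol

theorem cross' (h : Refl E θ Bs) : ∀ x y, E x y → ¬ Bs x → Bs y → y = θ x := by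
  intro x y hE hx hy
  have := h.cross y x (h.symm x y hE) hy hx
  rw [this, h.invol]

theorem swap' (h : Refl E θ Bs) : ∀ x, ¬ Bs (θ x) ↔ Bs x := by
  intro x; rw [h.swap]; tauto

end Refl

structure PA (E : V → V → Prop) (θ : V → V) (Bs : V → Prop) (u' : V) (S P : Finset V)
    (f : V → V) : Prop where
  triv : ∀ w, Bs w → f w = w
  inj : ∀ a a', ¬ Bs a → ¬ Bs a' → f a = f a' → a = a'
  adj : ∀ a, ¬ Bs a → f a = a ∨ E a (f a)
  Sdef : ∀ a, a ∈ S ↔ (¬ Bs a ∧ Bs (f a))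
  Scross : ∀ a ∈ S, f a = θ a
  ran : ∀ b, ¬ Bs b → ((b ≠ u' ∧ b ∉ P) ↔ ∃ a, ¬ Bs a ∧ f a = b)
  Pgood : ∀ p ∈ P, ¬ Bs p ∧ E (θ p) p
  unotP : u' ∉ P

structure PB (E : V → V → Prop) (θ : V → V) (Bs : V → Prop) (v' : V) (S P : Finset V)
    (g : V → V) : Prop where
  triv : ∀ w, ¬ (Bs w ∧ w ≠ v') → g w = w
  inj : ∀ b b', (Bs b ∧ b ≠ v') → (Bs b' ∧ b' ≠ v') → g b = g b' → b = b'
  adj : ∀ b, Bs b → b ≠ v' → g b = b ∨ E b (g b)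
  Pdef : ∀ b, (Bs b ∧ b ≠ v' ∧ ¬ Bs (g b)) ↔ ∃ p ∈ P, b = θ p
  Pcross : ∀ p ∈ P, g (θ p) = p
  ran : ∀ b, Bs b → ((∃ w, (Bs w ∧ w ≠ v') ∧ g w = b) ↔ ∀ s ∈ S, b ≠ θ s)
  Sgood : ∀ s ∈ S, ¬ Bs s ∧ E s (θ s)
  Pgood : ∀ p ∈ P, ¬ Bs p

noncomputable def FA (α : ℝ) (E : V → V → Prop) (θ : V → V) (Bs : V → Prop) (u' : V)
    (S P : Finset V) : ℝ :=
  ∑ f ∈ Finset.univ.filter (PA E θ Bs u' S P), whalf α f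

noncomputable def GB (α : ℝ) (E : V → V → Prop) (θ : V → V) (Bs : V → Prop) (v' : V)
    (S P : Finset V) : ℝ :=
  ∑ g ∈ Finset.univ.filter (PB E θ Bs v' S P), whalf α g

end RLP
namespace RLP
open Finset Function
open scoped Classical

variable {V : Type*} [Fintype V] [DecidableEq V]
variable {E : V → V → Prop} {θ : V → V} {Bs : V → Prop}

noncomputable def Sdat (Bs : V → Prop) (f : V → V) : Finset V :=
  Finset.univ.filter (fun a => ¬ Bs a ∧ Bs (f a))

noncomputable def Pdat (Bs : V → Prop) (u' : V) (f : V → V) : Finset V :=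
  Finset.univ.filter (fun b => ¬ Bs b ∧ b ≠ u' ∧ ∀ a, ¬ Bs a → f a ≠ b)

noncomputable def split1 (Bs : V → Prop) (π : V → V) : V → V :=
  fun w => if Bs w then w else π w

noncomputable def split2 (Bs : V → Prop) (v : V) (π : V → V) : V → V :=
  fun w => if Bs w ∧ w ≠ v then π w else w

noncomputable def glue (Bs : V → Prop) (u v : V) (fg : (V → V) × (V → V)) : V → V :=
  fun w => if w = v then u else if Bs w then fg.2 w else fg.1 w

def Compat (E : V → V → Prop) (θ : V → V) (Bs : V → Prop) (u v : V)
    (fg : (V → V) × (V → V)) : Prop :=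
  PA E θ Bs u (Sdat Bs fg.1) (Pdat Bs u fg.1) fg.1 ∧
  PB E θ Bs v (Sdat Bs fg.1) (Pdat Bs u fg.1) fg.2

theorem mem_Sdat {f : V → V} {a : V} : a ∈ Sdat Bs f ↔ (¬ Bs a ∧ Bs (f a)) := by
  simp [Sdat]

theorem mem_Pdat {f : V → V} {u' b : V} :
    b ∈ Pdat Bs u' f ↔ (¬ Bs b ∧ b ≠ u' ∧ ∀ a, ¬ Bs a → f a ≠ b) := by
  simp [Pdat]

section Split

variable {u v : V} {π : V → V}

theorem pdat_preimage (h : Refl E θ Bs) (hu : ¬ Bs u) (hv : Bs v) (hπ : Qfull E u v π)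
    {p : V} (hp : p ∈ Pdat Bs u (split1 Bs π)) : Bs (θ p) ∧ θ p ≠ v ∧ π (θ p) = p := by
  obtain ⟨hpB, hpu, hpnopre⟩ := mem_Pdat.mp hp
  obtain ⟨hbij, hval, hnb⟩ := hπ
  obtain ⟨w, hw⟩ := hbij.surjective p
  have hwv : w ≠ v := by rintro rfl; rw [hval] at hw; exact hpu hw.symm
  have hwB : Bs w := by
    by_contra hwB
    exact hpnopre w hwB (by simpa [split1, hwB] using hw)
  have hπw : π w ≠ w := by rw [hw]; rintro rfl; exact hpB hwB
  have hE : E w p := by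
    rcases hnb w hwv with h1 | h1
    · exact absurd (hw ▸ h1) (hw ▸ hπw)
    · exact hw ▸ h1
  have hpθ : p = θ w := h.cross w p hE hwB hpB
  have hwθ : w = θ p := by rw [hpθ, h.invol]
  exact ⟨hwθ ▸ hwB, hwθ ▸ hwv, by rw [← hwθ, hw]⟩

theorem sdat_cross (h : Refl E θ Bs) (hv : Bs v) (hπ : Qfull E u v π)
    {s : V} (hs : s ∈ Sdat Bs (split1 Bs π)) :
    ¬ Bs s ∧ Bs (π s) ∧ E s (π s) ∧ π s = θ s := by
  obtain ⟨hbij, hval, hnb⟩ := hπ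
  obtain ⟨hsA, hsBf⟩ := mem_Sdat.mp hs
  have hfs : split1 Bs π s = π s := by simp [split1, hsA]
  rw [hfs] at hsBf
  have hπs : π s ≠ s := fun hc => hsA (hc ▸ hsBf)
  have hE : E s (π s) := by
    rcases hnb s (fun hc => hsA (hc ▸ hv)) with h1 | h1
    · exact absurd h1 hπs
    · exact h1
  exact ⟨hsA, hsBf, hE, h.cross' s (π s) hE hsA hsBf⟩

theorem split_PA (h : Refl E θ Bs) (hu : ¬ Bs u) (hv : Bs v) (hπ : Qfull E u v π) :
    PA E θ Bs u (Sdat Bs (split1 Bs π)) (Pdat Bs u (split1 Bs π)) (split1 Bs π) := by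
  have hπ' := hπ
  obtain ⟨hbij, hval, hnb⟩ := hπ
  set f := split1 Bs π with hf
  have hfa : ∀ a, ¬ Bs a → f a = π a := fun a ha => by simp [hf, split1, ha]
  refine ⟨fun w hw => by simp [hf, split1, hw], ?_, ?_, fun a => mem_Sdat, ?_, ?_, ?_, ?_⟩
  · intro a a' ha ha' hfe
    rw [hfa a ha, hfa a' ha'] at hfe
    exact hbij.injective hfe
  · intro a ha
    rw [hfa a ha]
    exact hnb a (fun hav => ha (hav ▸ hv))
  · intro a haS
    have ha := (mem_Sdat.mp haS).1
    rw [hfa a ha]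
    exact (sdat_cross h hv hπ' haS).2.2.2
  · intro b hb
    constructor
    · rintro ⟨hbu, hbP⟩
      rw [mem_Pdat] at hbP
      push_neg at hbP
      obtain ⟨a, ha, hab⟩ := hbP hb hbu
      exact ⟨a, ha, not_not.mp (by simpa using hab)⟩
    · rintro ⟨a, ha, hab⟩
      have hav : a ≠ v := fun hav => ha (hav ▸ hv)
      rw [hfa a ha] at hab
      refine ⟨?_, ?_⟩
      · intro hbu
        exact hav (hbij.injective (by rw [hab, hbu, hval]))
      · rw [mem_Pdat]
        push_neg
        intro _ _
        exact ⟨a, ha, by rw [hfa a ha, hab]⟩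
  · intro p hp
    have hpB := (mem_Pdat.mp hp).1
    obtain ⟨hθB, hθv, hπθ⟩ := pdat_preimage h hu hv hπ' hp
    have hne : π (θ p) ≠ θ p := by rw [hπθ]; intro hc; exact hpB (hc ▸ hθB)
    have hE : E (θ p) (π (θ p)) := by
      rcases hnb (θ p) hθv with h1 | h1
      · exact absurd h1 hne
      · exact h1
    exact ⟨hpB, by simpa only [hπθ] using hE⟩
  · intro hc
    exact (mem_Pdat.mp hc).2.1 rfl

theorem split_PB (h : Refl E θ Bs) (hu : ¬ Bs u) (hv : Bs v) (hπ : Qfull E u v π) :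
    PB E θ Bs v (Sdat Bs (split1 Bs π)) (Pdat Bs u (split1 Bs π)) (split2 Bs v π) := by
  have hπ' := hπ
  obtain ⟨hbij, hval, hnb⟩ := hπ
  set f := split1 Bs π with hf
  set g := split2 Bs v π with hg
  have hfa : ∀ a, ¬ Bs a → f a = π a := fun a ha => by simp [hf, split1, ha]
  have hga : ∀ b, Bs b → b ≠ v → g b = π b := fun b hb hbv => by
    simp [hg, split2, hb, hbv]
  refine ⟨fun w hw => by simp only [hg, split2]; rw [if_neg hw], ?_, ?_, ?_, ?_, ?_, ?_, ?_⟩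
  · intro b b' hb hb' hbe
    rw [hga b hb.1 hb.2, hga b' hb'.1 hb'.2] at hbe
    exact hbij.injective hbe
  · intro b hb hbv
    rw [hga b hb hbv]
    exact hnb b hbv
  · intro b
    constructor
    · rintro ⟨hbB, hbv, hgb⟩
      rw [hga b hbB hbv] at hgb
      have hπb : π b ≠ b := fun hc => hgb (by rw [hc]; exact hbB)
      have hE : E b (π b) := by
        rcases hnb b hbv with h1 | h1
        · exact absurd h1 hπb
        · exact h1
      have hpθ : π b = θ b := h.cross b (π b) hE hbB hgb
      refine ⟨π b, ?_, by rw [hpθ, h.invol]⟩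
      rw [mem_Pdat]
      refine ⟨hgb, ?_, ?_⟩
      · intro hc
        exact hbv (hbij.injective (hc.trans hval.symm))
      · intro a ha hc
        rw [hfa a ha] at hc
        have hab : a = b := hbij.injective hc
        exact ha (by rwa [hab])
    · rintro ⟨p, hp, rfl⟩
      have hpB := (mem_Pdat.mp hp).1
      obtain ⟨hθB, hθv, hπθ⟩ := pdat_preimage h hu hv hπ' hp
      exact ⟨hθB, hθv, by rw [hga _ hθB hθv, hπθ]; exact hpB⟩
  · intro p hp
    obtain ⟨hθB, hθv, hπθ⟩ := pdat_preimage h hu hv hπ' hp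
    rw [hga _ hθB hθv, hπθ]
  · intro b hbB
    constructor
    · rintro ⟨w, ⟨hwB, hwv⟩, hgw⟩ s hs hbs
      obtain ⟨hsA, _, _, hscross⟩ := sdat_cross h hv hπ' hs
      rw [hga w hwB hwv] at hgw
      have : π s = π w := by rw [hscross, ← hbs, hgw]
      exact hsA ((hbij.injective this) ▸ hwB)
    · intro hns
      obtain ⟨w, hw⟩ := hbij.surjective b
      have hwv : w ≠ v := by
        rintro rfl
        rw [hval] at hw
        exact hu (hw ▸ hbB)
      have hwB : Bs w := by
        by_contra hwA
        have hwS : w ∈ Sdat Bs f := mem_Sdat.mpr ⟨hwA, by rw [hfa w hwA, hw]; exact hbB⟩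
        obtain ⟨_, _, _, hscross⟩ := sdat_cross h hv hπ' hwS
        exact hns w hwS (by rw [← hw, hscross])
      exact ⟨w, ⟨hwB, hwv⟩, by rw [hga w hwB hwv, hw]⟩
  · intro s hs
    obtain ⟨hsA, _, hE, hscross⟩ := sdat_cross h hv hπ' hs
    exact ⟨hsA, hscross ▸ hE⟩
  · intro p hp
    exact (mem_Pdat.mp hp).1

end Split

end RLP
namespace RLP
open Finset Function
open scoped Classical

variable {V : Type*} [Fintype V] [DecidableEq V]
variable {E : V → V → Prop} {θ : V → V} {Bs : V → Prop}

section Glue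

variable {α : ℝ} {u v : V} {S P : Finset V} {f g : V → V} {π : V → V}

theorem glue_split (hπ : Qfull E u v π) :
    glue Bs u v (split1 Bs π, split2 Bs v π) = π := by
  funext w
  by_cases hwv : w = v
  · subst hwv
    simp only [glue, if_pos rfl]
    exact hπ.2.1.symm
  · by_cases hwB : Bs w
    · simp [glue, hwv, hwB, split2]
    · simp [glue, hwv, hwB, split1]

theorem split_glue (hv : Bs v) (hf : PA E θ Bs u S P f) (hg : PB E θ Bs v S P g) :
    (split1 Bs (glue Bs u v (f, g)), split2 Bs v (glue Bs u v (f, g))) = (f, g) := by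
  have h1 : split1 Bs (glue Bs u v (f, g)) = f := by
    funext w
    by_cases hwB : Bs w
    · simp only [split1, if_pos hwB]
      exact (hf.triv w hwB).symm
    · have hwv : w ≠ v := fun hc => hwB (hc ▸ hv)
      simp [split1, glue, hwB, hwv]
  have h2 : split2 Bs v (glue Bs u v (f, g)) = g := by
    funext w
    by_cases hw : Bs w ∧ w ≠ v
    · simp [split2, glue, hw, hw.1, hw.2]
    · simp only [split2, if_neg hw]
      exact (hg.triv w hw).symm
  rw [h1, h2]

theorem glue_no_pre_u (h : Refl E θ Bs) (hu : ¬ Bs u) (hv : Bs v)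
    (hf : PA E θ Bs u S P f) (hg : PB E θ Bs v S P g) :
    ∀ w, w ≠ v → glue Bs u v (f, g) w ≠ u := by
  intro w hwv hc
  by_cases hwB : Bs w
  · have hgw : g w = u := by simpa [glue, hwv, hwB] using hc
    have hngB : ¬ Bs (g w) := by rw [hgw]; exact hu
    obtain ⟨p, hp, hwp⟩ := (hg.Pdef w).mp ⟨hwB, hwv, hngB⟩
    have : g w = p := by rw [hwp]; exact hg.Pcross p hp
    rw [hgw] at this
    exact hf.unotP (this ▸ hp)
  · have hfw : f w = u := by simpa [glue, hwv, hwB] using hc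
    exact ((hf.ran u hu).mpr ⟨w, hwB, hfw⟩).1 rfl

theorem glue_Q (h : Refl E θ Bs) (hu : ¬ Bs u) (hv : Bs v)
    (hf : PA E θ Bs u S P f) (hg : PB E θ Bs v S P g) :
    Qfull E u v (glue Bs u v (f, g)) := by
  set π := glue Bs u v (f, g) with hπdef
  have hπv : π v = u := by simp [hπdef, glue]
  have hπA : ∀ a, ¬ Bs a → π a = f a := by
    intro a ha
    have hav : a ≠ v := fun hc => ha (hc ▸ hv)
    simp [hπdef, glue, ha, hav]
  have hπB : ∀ b, Bs b → b ≠ v → π b = g b := by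
    intro b hb hbv
    simp [hπdef, glue, hb, hbv]
  have hinj : Function.Injective π := by
    intro w1 w2 he
    by_cases h1v : w1 = v
    · by_cases h2v : w2 = v
      · rw [h1v, h2v]
      · exfalso
        rw [h1v, hπv] at he
        exact glue_no_pre_u h hu hv hf hg w2 h2v he.symm
    · by_cases h2v : w2 = v
      · exfalso
        rw [h2v, hπv] at he
        exact glue_no_pre_u h hu hv hf hg w1 h1v he
      · by_cases h1B : Bs w1
        · by_cases h2B : Bs w2
          · rw [hπB w1 h1B h1v, hπB w2 h2B h2v] at he
            exact hg.inj w1 w2 ⟨h1B, h1v⟩ ⟨h2B, h2v⟩ he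
          · exfalso
            rw [hπB w1 h1B h1v, hπA w2 h2B] at he
            by_cases hfB : Bs (f w2)
            · have hw2S : w2 ∈ S := (hf.Sdef w2).mpr ⟨h2B, hfB⟩
              have hfθ : f w2 = θ w2 := hf.Scross w2 hw2S
              exact ((hg.ran (f w2) hfB).mp ⟨w1, ⟨h1B, h1v⟩, he⟩) w2 hw2S hfθ
            · have hngB : ¬ Bs (g w1) := by rw [he]; exact hfB
              obtain ⟨p, hp, hwp⟩ := (hg.Pdef w1).mp ⟨h1B, h1v, hngB⟩
              have hgp : g w1 = p := by rw [hwp]; exact hg.Pcross p hp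
              have hfp : f w2 = p := by rw [← he, hgp]
              exact ((hf.ran p (hg.Pgood p hp)).mpr ⟨w2, h2B, hfp⟩).2 hp
        · by_cases h2B : Bs w2
          · exfalso
            rw [hπB w2 h2B h2v, hπA w1 h1B] at he
            by_cases hfB : Bs (f w1)
            · have hw1S : w1 ∈ S := (hf.Sdef w1).mpr ⟨h1B, hfB⟩
              have hfθ : f w1 = θ w1 := hf.Scross w1 hw1S
              exact ((hg.ran (f w1) hfB).mp ⟨w2, ⟨h2B, h2v⟩, he.symm⟩) w1 hw1S hfθ
            · have hngB : ¬ Bs (g w2) := by rw [← he]; exact hfB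
              obtain ⟨p, hp, hwp⟩ := (hg.Pdef w2).mp ⟨h2B, h2v, hngB⟩
              have hgp : g w2 = p := by rw [hwp]; exact hg.Pcross p hp
              have hfp : f w1 = p := by rw [he, hgp]
              exact ((hf.ran p (hg.Pgood p hp)).mpr ⟨w1, h1B, hfp⟩).2 hp
          · rw [hπA w1 h1B, hπA w2 h2B] at he
            exact hf.inj w1 w2 h1B h2B he
  refine ⟨Finite.injective_iff_bijective.mp hinj, hπv, ?_⟩
  intro w hwv
  by_cases hwB : Bs w
  · rw [hπB w hwB hwv]
    exact hg.adj w hwB hwv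
  · rw [hπA w hwB]
    exact hf.adj w hwB

theorem glue_weight (hv : Bs v) (hf : PA E θ Bs u S P f) (hg : PB E θ Bs v S P g) :
    wfull α v (glue Bs u v (f, g)) = whalf α f * whalf α g := by
  set π := glue Bs u v (f, g) with hπdef
  have hπA : ∀ a, ¬ Bs a → π a = f a := by
    intro a ha
    have hav : a ≠ v := fun hc => ha (hc ▸ hv)
    simp [hπdef, glue, ha, hav]
  have hπB : ∀ b, Bs b → b ≠ v → π b = g b := by
    intro b hb hbv
    simp [hπdef, glue, hb, hbv]
  have hmf : ∀ w, f w ≠ w → ¬ Bs w := fun w hw hB => hw (hf.triv w hB)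
  have hmg : ∀ w, g w ≠ w → (Bs w ∧ w ≠ v) := by
    intro w hw
    by_contra hc
    exact hw (hg.triv w hc)
  have hset : Finset.univ.filter (fun w => w ≠ v ∧ π w ≠ w)
      = movedSet f ∪ movedSet g := by
    ext w
    simp only [mem_filter, mem_univ, true_and, mem_union, movedSet]
    constructor
    · rintro ⟨hwv, hπw⟩
      by_cases hwB : Bs w
      · right; rw [← hπB w hwB hwv]; exact hπw
      · left; rw [← hπA w hwB]; exact hπw
    · rintro (hw | hw)
      · have hwB := hmf w hw
        have hwv : w ≠ v := fun hc => hwB (hc ▸ hv)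
        exact ⟨hwv, by rw [hπA w hwB]; exact hw⟩
      · obtain ⟨hwB, hwv⟩ := hmg w hw
        exact ⟨hwv, by rw [hπB w hwB hwv]; exact hw⟩
  have hdisj : Disjoint (movedSet f) (movedSet g) := by
    rw [Finset.disjoint_left]
    intro w hwf hwg
    simp only [movedSet, mem_filter, mem_univ, true_and] at hwf hwg
    exact (hmf w hwf) (hmg w hwg).1
  rw [wfull, hset, Finset.card_union_of_disjoint hdisj, whalf, whalf, ← Real.exp_add]
  congr 1
  push_cast
  ring

theorem PA_unique (hf : PA E θ Bs u S P f) : S = Sdat Bs f ∧ P = Pdat Bs u f := by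
  constructor
  · ext a
    rw [mem_Sdat]
    exact hf.Sdef a
  · ext b
    rw [mem_Pdat]
    constructor
    · intro hbP
      have hbA : ¬ Bs b := (hf.Pgood b hbP).1
      refine ⟨hbA, ?_, ?_⟩
      · rintro rfl
        exact hf.unotP hbP
      · intro a ha hc
        exact ((hf.ran b hbA).mpr ⟨a, ha, hc⟩).2 hbP
    · rintro ⟨hbA, hbu, hnopre⟩
      by_contra hbP
      obtain ⟨a, ha, hc⟩ := (hf.ran b hbA).mp ⟨hbu, hbP⟩
      exact hnopre a ha hc

theorem master (h : Refl E θ Bs) (hu : ¬ Bs u) (hv : Bs v) :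
    Zfull α E u v = ∑ SP : Finset V × Finset V,
      FA α E θ Bs u SP.1 SP.2 * GB α E θ Bs v SP.1 SP.2 := by
  have step1 : Zfull α E u v
      = ∑ fg ∈ Finset.univ.filter (Compat E θ Bs u v),
          whalf α fg.1 * whalf α fg.2 := by
    refine Finset.sum_nbij' (fun π => (split1 Bs π, split2 Bs v π)) (glue Bs u v) ?_ ?_ ?_ ?_ ?_
    · intro π hπ
      rw [Finset.mem_filter] at hπ ⊢
      exact ⟨Finset.mem_univ _, split_PA h hu hv hπ.2, split_PB h hu hv hπ.2⟩
    · intro fg hfg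
      rw [Finset.mem_filter] at hfg ⊢
      obtain ⟨hfP, hgP⟩ := hfg.2
      have := glue_Q h hu hv hfP hgP
      exact ⟨Finset.mem_univ _, by simpa using this⟩
    · intro π hπ
      rw [Finset.mem_filter] at hπ
      exact glue_split hπ.2
    · intro fg hfg
      rw [Finset.mem_filter] at hfg
      obtain ⟨hfP, hgP⟩ := hfg.2
      exact split_glue hv hfP hgP
    · intro π hπ
      rw [Finset.mem_filter] at hπ
      have hgs := glue_split (Bs := Bs) hπ.2
      conv_lhs => rw [← hgs]
      exact glue_weight hv (split_PA h hu hv hπ.2) (split_PB h hu hv hπ.2)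
  rw [step1]
  have step2 : ∀ (fg : (V → V) × (V → V)),
      (∑ SP : Finset V × Finset V,
        if PA E θ Bs u SP.1 SP.2 fg.1 ∧ PB E θ Bs v SP.1 SP.2 fg.2
        then whalf α fg.1 * whalf α fg.2 else 0)
      = if Compat E θ Bs u v fg then whalf α fg.1 * whalf α fg.2 else 0 := by
    intro fg
    by_cases hc : Compat E θ Bs u v fg
    · rw [if_pos hc]
      rw [Finset.sum_eq_single (Sdat Bs fg.1, Pdat Bs u fg.1)]
      · exact if_pos ⟨hc.1, hc.2⟩
      · intro SP _ hne
        rw [if_neg]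
        rintro ⟨hPA, hPB⟩
        obtain ⟨e1, e2⟩ := PA_unique hPA
        exact hne (Prod.ext e1 e2)
      · intro hcu
        exact absurd (Finset.mem_univ _) hcu
    · rw [if_neg hc]
      apply Finset.sum_eq_zero
      intro SP _
      rw [if_neg]
      rintro ⟨hPA, hPB⟩
      obtain ⟨e1, e2⟩ := PA_unique hPA
      rw [e1, e2] at hPA hPB
      exact hc ⟨hPA, hPB⟩
  have expand : ∀ SP : Finset V × Finset V,
      FA α E θ Bs u SP.1 SP.2 * GB α E θ Bs v SP.1 SP.2
      = ∑ fg : (V → V) × (V → V),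
          if PA E θ Bs u SP.1 SP.2 fg.1 ∧ PB E θ Bs v SP.1 SP.2 fg.2
          then whalf α fg.1 * whalf α fg.2 else 0 := by
    intro SP
    rw [FA, GB, Finset.sum_filter, Finset.sum_filter, Finset.sum_mul_sum]
    rw [Fintype.sum_prod_type]
    exact Finset.sum_congr rfl fun f _ => Finset.sum_congr rfl fun g _ =>
      ite_zero_mul_ite_zero _ _ _ _
  calc ∑ fg ∈ Finset.univ.filter (Compat E θ Bs u v), whalf α fg.1 * whalf α fg.2
      = ∑ fg : (V → V) × (V → V),
          if Compat E θ Bs u v fg then whalf α fg.1 * whalf α fg.2 else 0 :=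
        Finset.sum_filter _ _
    _ = ∑ fg : (V → V) × (V → V), ∑ SP : Finset V × Finset V,
          if PA E θ Bs u SP.1 SP.2 fg.1 ∧ PB E θ Bs v SP.1 SP.2 fg.2
          then whalf α fg.1 * whalf α fg.2 else 0 :=
        Finset.sum_congr rfl fun fg _ => (step2 fg).symm
    _ = ∑ SP : Finset V × Finset V, ∑ fg : (V → V) × (V → V),
          if PA E θ Bs u SP.1 SP.2 fg.1 ∧ PB E θ Bs v SP.1 SP.2 fg.2
          then whalf α fg.1 * whalf α fg.2 else 0 := Finset.sum_comm
    _ = ∑ SP : Finset V × Finset V,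
          FA α E θ Bs u SP.1 SP.2 * GB α E θ Bs v SP.1 SP.2 :=
        Finset.sum_congr rfl fun SP _ => (expand SP).symm

end Glue

end RLP
namespace RLP
open Finset Function
open scoped Classical

variable {V : Type*} [Fintype V] [DecidableEq V]
variable {E : V → V → Prop} {θ : V → V} {Bs : V → Prop}

noncomputable def revmap (θ : V → V) (Bs : V → Prop) (v' : V) (g : V → V) : V → V :=
  fun a => if ¬ Bs a then
      (if hx : ∃ w, (Bs w ∧ w ≠ v') ∧ g w = θ a then θ hx.choose else θ a)
    else a

noncomputable def vremap (θ : V → V) (Bs : V → Prop) (v' : V) (f : V → V) : V → V :=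
  fun b => if Bs b ∧ b ≠ v' then
      (if hx : ∃ a, ¬ Bs a ∧ f a = θ b then θ hx.choose else θ b)
    else b

section Rev

variable {α : ℝ} {v' : V} {S P : Finset V} {g f : V → V}

theorem revmap_spec_pos {a : V} (ha : ¬ Bs a)
    (hx : ∃ w, (Bs w ∧ w ≠ v') ∧ g w = θ a) :
    revmap θ Bs v' g a = θ hx.choose := by
  rw [revmap, if_pos ha, dif_pos hx]

theorem revmap_spec_neg {a : V} (ha : ¬ Bs a)
    (hx : ¬ ∃ w, (Bs w ∧ w ≠ v') ∧ g w = θ a) :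
    revmap θ Bs v' g a = θ a := by
  rw [revmap, if_pos ha, dif_neg hx]

theorem vremap_spec_pos {b : V} (hb : Bs b ∧ b ≠ v')
    (hx : ∃ a, ¬ Bs a ∧ f a = θ b) :
    vremap θ Bs v' f b = θ hx.choose := by
  rw [vremap, if_pos hb, dif_pos hx]

theorem vremap_spec_neg {b : V} (hb : Bs b ∧ b ≠ v')
    (hx : ¬ ∃ a, ¬ Bs a ∧ f a = θ b) :
    vremap θ Bs v' f b = θ b := by
  rw [vremap, if_pos hb, dif_neg hx]

/-- If the no-preimage branch is taken at `a ∈ A`, then `a ∈ S`. -/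
theorem revmap_elseS (h : Refl E θ Bs) (hg : PB E θ Bs v' S P g) {a : V} (ha : ¬ Bs a)
    (hx : ¬ ∃ w, (Bs w ∧ w ≠ v') ∧ g w = θ a) : a ∈ S := by
  have hBa : Bs (θ a) := (h.swap a).mpr ha
  have := (hg.ran (θ a) hBa)
  rw [this] at hx
  push_neg at hx
  obtain ⟨s, hs, hth⟩ := hx
  rw [h.θinj hth]
  exact hs

theorem rev_PA (h : Refl E θ Bs) (hv' : Bs v') (hg : PB E θ Bs v' S P g) :
    PA E θ Bs (θ v') S P (revmap θ Bs v' g) := by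
  have hSmem : ∀ a ∈ S, revmap θ Bs v' g a = θ a ∧ ¬ Bs a ∧ E a (θ a) := by
    intro a haS
    obtain ⟨ha, hEa⟩ := hg.Sgood a haS
    refine ⟨?_, ha, hEa⟩
    by_cases hx : ∃ w, (Bs w ∧ w ≠ v') ∧ g w = θ a
    · exfalso
      obtain ⟨w, hw, hgw⟩ := hx
      have hBa : Bs (θ a) := (h.swap a).mpr ha
      exact ((hg.ran (θ a) hBa).mp ⟨w, hw, hgw⟩) a haS rfl
    · exact revmap_spec_neg ha hx
  refine ⟨?_, ?_, ?_, ?_, ?_, ?_, ?_, ?_⟩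
  · intro w hw
    rw [revmap, if_neg (not_not.mpr hw)]
  · -- injectivity
    intro a a' ha ha' hfe
    by_cases hx : ∃ w, (Bs w ∧ w ≠ v') ∧ g w = θ a
    · have hs := hx.choose_spec
      rw [revmap_spec_pos ha hx] at hfe
      by_cases hx' : ∃ w, (Bs w ∧ w ≠ v') ∧ g w = θ a'
      · have hs' := hx'.choose_spec
        rw [revmap_spec_pos ha' hx'] at hfe
        have : hx.choose = hx'.choose := h.θinj hfe
        have := hs.2.symm.trans (this ▸ hs'.2)
        exact h.θinj this
      · rw [revmap_spec_neg ha' hx'] at hfe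
        exact absurd (h.θinj hfe ▸ hs.1.1) ha'
    · rw [revmap_spec_neg ha hx] at hfe
      by_cases hx' : ∃ w, (Bs w ∧ w ≠ v') ∧ g w = θ a'
      · have hs' := hx'.choose_spec
        rw [revmap_spec_pos ha' hx'] at hfe
        exact absurd ((h.θinj hfe).symm ▸ hs'.1.1) ha
      · rw [revmap_spec_neg ha' hx'] at hfe
        exact h.θinj hfe
  · -- adjacency
    intro a ha
    by_cases hx : ∃ w, (Bs w ∧ w ≠ v') ∧ g w = θ a
    · have hs := hx.choose_spec
      set c := hx.choose with hc
      rw [revmap_spec_pos ha hx]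
      by_cases hgc : g c = c
      · left
        have : c = θ a := by rw [← hs.2, hgc]
        rw [← hc, this, h.invol]
      · right
        have hE1 : E c (g c) := (hg.adj c hs.1.1 hs.1.2).resolve_left hgc
        rw [hs.2] at hE1
        have hE2 : E (θ c) a := by
          have := h.adjm c (θ a) hE1
          rwa [h.invol] at this
        exact h.symm _ _ hE2
    · right
      have haS := revmap_elseS h hg ha hx
      rw [revmap_spec_neg ha hx]
      exact (hg.Sgood a haS).2
  · -- Sdef
    intro a
    constructor
    · intro haS
      obtain ⟨hfa, ha, _⟩ := hSmem a haS
      exact ⟨ha, by rw [hfa]; exact (h.swap a).mpr ha⟩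
    · rintro ⟨ha, hBfa⟩
      by_cases hx : ∃ w, (Bs w ∧ w ≠ v') ∧ g w = θ a
      · exfalso
        rw [revmap_spec_pos ha hx] at hBfa
        exact (h.swap' _).mpr hx.choose_spec.1.1 hBfa
      · exact revmap_elseS h hg ha hx
  · intro a haS
    exact (hSmem a haS).1
  · -- ran
    intro b hb
    constructor
    · rintro ⟨hb1, hb2⟩
      have hwB : Bs (θ b) := (h.swap b).mpr hb
      have hwv : θ b ≠ v' := fun hc => hb1 (by rw [← hc, h.invol])
      by_cases hBc : Bs (g (θ b))
      · refine ⟨θ (g (θ b)), (h.swap' _).mpr hBc, ?_⟩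
        have hx : ∃ w, (Bs w ∧ w ≠ v') ∧ g w = θ (θ (g (θ b))) := by
          refine ⟨θ b, ⟨hwB, hwv⟩, ?_⟩
          rw [h.invol]
        rw [revmap_spec_pos ((h.swap' _).mpr hBc) hx]
        have hs := hx.choose_spec
        have : hx.choose = θ b := by
          apply hg.inj _ _ hs.1 ⟨hwB, hwv⟩
          rw [hs.2, h.invol]
        rw [this, h.invol]
      · exfalso
        obtain ⟨p, hp, hθp⟩ := (hg.Pdef (θ b)).mp ⟨hwB, hwv, hBc⟩
        have h3 := congrArg θ hθp
        rw [h.invol, h.invol] at h3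
        exact hb2 (by rw [h3]; exact hp)
    · rintro ⟨a, ha, hfa⟩
      by_cases hx : ∃ w, (Bs w ∧ w ≠ v') ∧ g w = θ a
      · have hs := hx.choose_spec
        rw [revmap_spec_pos ha hx] at hfa
        constructor
        · intro hc
          exact hs.1.2 (h.θinj (hfa.trans hc))
        · intro hbP
          have h1 : g (θ b) = b := hg.Pcross b hbP
          have h2 : θ b = hx.choose := by rw [← hfa, h.invol]
          rw [h2, hs.2] at h1
          have : Bs (θ a) := (h.swap a).mpr ha
          rw [h1] at this
          exact (hg.Pgood b hbP) this
      · exfalso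
        rw [revmap_spec_neg ha hx] at hfa
        have : Bs b := by rw [← hfa]; exact (h.swap a).mpr ha
        exact hb this
  · -- Pgood
    intro p hp
    have hpA : ¬ Bs p := hg.Pgood p hp
    refine ⟨hpA, ?_⟩
    have hθv : θ p ≠ v' := by
      intro hc
      have h1 : g (θ p) = p := hg.Pcross p hp
      rw [hc] at h1
      have h2 : g v' = v' := hg.triv v' (by simp)
      rw [h1] at h2
      exact hpA (h2 ▸ hv')
    have hBθ : Bs (θ p) := (h.swap p).mpr hpA
    have hgp : g (θ p) = p := hg.Pcross p hp
    have hne : g (θ p) ≠ θ p := by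
      rw [hgp]
      intro hc
      exact h.nofix p hc.symm
    have := (hg.adj (θ p) hBθ hθv).resolve_left hne
    rwa [hgp] at this
  · -- u' ∉ P
    intro hc
    have h1 : g (θ (θ v')) = θ v' := hg.Pcross (θ v') hc
    rw [h.invol] at h1
    have h2 : g v' = v' := hg.triv v' (by simp)
    rw [h2] at h1
    exact h.nofix v' h1.symm

end Rev

end RLP
namespace RLP
open Finset Function
open scoped Classical

variable {V : Type*} [Fintype V] [DecidableEq V]
variable {E : V → V → Prop} {θ : V → V} {Bs : V → Prop}

section Rev2

variable {α : ℝ} {v' : V} {S P : Finset V} {g f : V → V}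

theorem vre_PB (h : Refl E θ Bs) (hv' : Bs v') (hf : PA E θ Bs (θ v') S P f) :
    PB E θ Bs v' S P (vremap θ Bs v' f) := by
  have huA : ¬ Bs (θ v') := (h.swap' v').mpr hv'
  have hPmem : ∀ p ∈ P, Bs (θ p) ∧ θ p ≠ v' ∧ vremap θ Bs v' f (θ p) = p := by
    intro p hp
    have hpA : ¬ Bs p := (hf.Pgood p hp).1
    have hBb : Bs (θ p) := (h.swap p).mpr hpA
    have hbv : θ p ≠ v' := by
      intro hc
      have : p = θ v' := by rw [← hc, h.invol]
      exact hf.unotP (this ▸ hp)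
    have hnx : ¬ ∃ a, ¬ Bs a ∧ f a = θ (θ p) := by
      rintro ⟨a, ha, hfa⟩
      rw [h.invol] at hfa
      exact ((hf.ran p hpA).mpr ⟨a, ha, hfa⟩).2 hp
    exact ⟨hBb, hbv, by rw [vremap_spec_neg ⟨hBb, hbv⟩ hnx, h.invol]⟩
  refine ⟨?_, ?_, ?_, ?_, fun p hp => (hPmem p hp).2.2, ?_, ?_, fun p hp => (hf.Pgood p hp).1⟩
  · intro w hw
    rw [vremap, if_neg hw]
  · intro b b' hb hb' hbe
    by_cases hx : ∃ a, ¬ Bs a ∧ f a = θ b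
    · have hs := hx.choose_spec
      rw [vremap_spec_pos hb hx] at hbe
      by_cases hx' : ∃ a, ¬ Bs a ∧ f a = θ b'
      · have hs' := hx'.choose_spec
        rw [vremap_spec_pos hb' hx'] at hbe
        have hce : hx.choose = hx'.choose := h.θinj hbe
        exact h.θinj (hs.2.symm.trans (hce ▸ hs'.2))
      · rw [vremap_spec_neg hb' hx'] at hbe
        exact absurd ((h.θinj hbe) ▸ hs.1) (not_not.mpr hb'.1)
    · rw [vremap_spec_neg hb hx] at hbe
      by_cases hx' : ∃ a, ¬ Bs a ∧ f a = θ b'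
      · have hs' := hx'.choose_spec
        rw [vremap_spec_pos hb' hx'] at hbe
        exact absurd ((h.θinj hbe).symm ▸ hs'.1) (not_not.mpr hb.1)
      · rw [vremap_spec_neg hb' hx'] at hbe
        exact h.θinj hbe
  · -- adjacency
    intro b hbB hbv
    by_cases hx : ∃ a, ¬ Bs a ∧ f a = θ b
    · have hs := hx.choose_spec
      rw [vremap_spec_pos ⟨hbB, hbv⟩ hx]
      by_cases hfc : f hx.choose = hx.choose
      · left
        have : hx.choose = θ b := hfc.symm.trans hs.2
        rw [this, h.invol]
      · right
        have hE1 : E hx.choose (f hx.choose) := (hf.adj hx.choose hs.1).resolve_left hfc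
        rw [hs.2] at hE1
        have hE2 := h.adjm hx.choose (θ b) hE1
        rw [h.invol] at hE2
        exact h.symm _ _ hE2
    · have hgb := vremap_spec_neg (f := f) ⟨hbB, hbv⟩ hx
      rw [hgb]
      right
      have hbA : ¬ Bs (θ b) := (h.swap' b).mpr hbB
      have hiff := hf.ran (θ b) hbA
      rw [← hiff] at hx
      push_neg at hx
      by_cases hbu : θ b = θ v'
      · exact absurd (h.θinj hbu) hbv
      · have hx2 : θ b ∈ P := hx hbu
        have := (hf.Pgood (θ b) hx2).2
        rwa [h.invol] at this
  · -- Pdef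
    intro b
    constructor
    · rintro ⟨hbB, hbv, hgb⟩
      by_cases hx : ∃ a, ¬ Bs a ∧ f a = θ b
      · exfalso
        rw [vremap_spec_pos ⟨hbB, hbv⟩ hx] at hgb
        exact hgb ((h.swap _).mpr hx.choose_spec.1)
      · have hiff := hf.ran (θ b) ((h.swap' b).mpr hbB)
        rw [← hiff] at hx
        push_neg at hx
        by_cases hbu : θ b = θ v'
        · exact absurd (h.θinj hbu) hbv
        · exact ⟨θ b, hx hbu, by rw [h.invol]⟩
    · rintro ⟨p, hp, rfl⟩
      obtain ⟨h1, h2, h3⟩ := hPmem p hp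
      exact ⟨h1, h2, by rw [h3]; exact (hf.Pgood p hp).1⟩
  · -- ran
    intro b hbB
    constructor
    · rintro ⟨w, hw, hgw⟩ s hs hbs
      have hsA : ¬ Bs s := ((hf.Sdef s).mp hs).1
      by_cases hx : ∃ a, ¬ Bs a ∧ f a = θ w
      · have hspec := hx.choose_spec
        rw [vremap_spec_pos hw hx] at hgw
        have hcs : hx.choose = s := h.θinj (by rw [hgw]; exact hbs)
        have hfs : f s = θ s := hf.Scross s hs
        have hth : f hx.choose = θ w := hspec.2
        rw [hcs, hfs] at hth
        exact hsA ((h.θinj hth.symm).symm ▸ hw.1)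
      · rw [vremap_spec_neg hw hx] at hgw
        have : ¬ Bs (θ w) := (h.swap' w).mpr hw.1
        rw [hgw] at this
        exact this hbB
    · intro hns
      have haA : ¬ Bs (θ b) := (h.swap' b).mpr hbB
      by_cases hBc : Bs (f (θ b))
      · exfalso
        have haS : θ b ∈ S := (hf.Sdef (θ b)).mpr ⟨haA, hBc⟩
        exact hns (θ b) haS (by rw [h.invol])
      · have hwB : Bs (θ (f (θ b))) := (h.swap _).mpr hBc
        have hwv : θ (f (θ b)) ≠ v' := by
          intro hc
          have : f (θ b) = θ v' := by rw [← h.invol (f (θ b)), hc]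
          exact ((hf.ran (θ v') huA).mpr ⟨θ b, haA, this⟩).1 rfl
        refine ⟨θ (f (θ b)), ⟨hwB, hwv⟩, ?_⟩
        have hx : ∃ a, ¬ Bs a ∧ f a = θ (θ (f (θ b))) := ⟨θ b, haA, by rw [h.invol]⟩
        rw [vremap_spec_pos ⟨hwB, hwv⟩ hx]
        have hspec := hx.choose_spec
        have : f hx.choose = f (θ b) := by rw [hspec.2, h.invol]
        have hce : hx.choose = θ b := hf.inj _ _ hspec.1 haA this
        rw [hce, h.invol]
  · -- Sgood
    intro s hs
    have hsA : ¬ Bs s := ((hf.Sdef s).mp hs).1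
    have hfs : f s = θ s := hf.Scross s hs
    have hne : f s ≠ s := by rw [hfs]; exact h.nofix s
    have := (hf.adj s hsA).resolve_left hne
    exact ⟨hsA, hfs ▸ this⟩

theorem vre_rev (h : Refl E θ Bs) (hv' : Bs v') (hg : PB E θ Bs v' S P g) :
    vremap θ Bs v' (revmap θ Bs v' g) = g := by
  have hfP := rev_PA h hv' hg
  funext b
  by_cases hb : Bs b ∧ b ≠ v'
  · by_cases hBgb : Bs (g b)
    · have ha : ¬ Bs (θ (g b)) := (h.swap' _).mpr hBgb
      have hx2 : ∃ w, (Bs w ∧ w ≠ v') ∧ g w = θ (θ (g b)) := ⟨b, hb, by rw [h.invol]⟩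
      have hch : hx2.choose = b :=
        hg.inj _ _ hx2.choose_spec.1 hb (by rw [hx2.choose_spec.2, h.invol])
      have hfa : revmap θ Bs v' g (θ (g b)) = θ b := by
        rw [revmap_spec_pos ha hx2, hch]
      have hx : ∃ a, ¬ Bs a ∧ revmap θ Bs v' g a = θ b := ⟨θ (g b), ha, hfa⟩
      rw [vremap_spec_pos hb hx]
      have hspec := hx.choose_spec
      have : hx.choose = θ (g b) := hfP.inj _ _ hspec.1 ha (hspec.2.trans hfa.symm)
      rw [this, h.invol]
    · obtain ⟨p, hp, hbp⟩ := (hg.Pdef b).mp ⟨hb.1, hb.2, hBgb⟩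
      have hgb : g b = p := by rw [hbp]; exact hg.Pcross p hp
      have hnx : ¬ ∃ a, ¬ Bs a ∧ revmap θ Bs v' g a = θ b := by
        rintro ⟨a, ha, hfa⟩
        have hfa' : revmap θ Bs v' g a = p := by rw [hfa, hbp, h.invol]
        exact ((hfP.ran p (hg.Pgood p hp)).mpr ⟨a, ha, hfa'⟩).2 hp
      rw [vremap_spec_neg hb hnx, hgb, hbp, h.invol]
  · rw [vremap, if_neg hb]
    exact (hg.triv b hb).symm

theorem rev_vre (h : Refl E θ Bs) (hv' : Bs v') (hf : PA E θ Bs (θ v') S P f) :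
    revmap θ Bs v' (vremap θ Bs v' f) = f := by
  have hgP := vre_PB h hv' hf
  have huA : ¬ Bs (θ v') := (h.swap' v').mpr hv'
  funext a
  by_cases ha : Bs a
  · rw [revmap, if_neg (not_not.mpr ha)]
    exact (hf.triv a ha).symm
  · by_cases hBfa : Bs (f a)
    · have haS : a ∈ S := (hf.Sdef a).mpr ⟨ha, hBfa⟩
      have hnx : ¬ ∃ w, (Bs w ∧ w ≠ v') ∧ vremap θ Bs v' f w = θ a := by
        rintro ⟨w, hw, hgw⟩
        exact ((hgP.ran (θ a) ((h.swap a).mpr ha)).mp ⟨w, hw, hgw⟩) a haS rfl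
      rw [revmap_spec_neg ha hnx]
      exact ((hf.Scross a haS)).symm
    · have hwB : Bs (θ (f a)) := (h.swap _).mpr hBfa
      have hwv : θ (f a) ≠ v' := by
        intro hc
        have : f a = θ v' := by rw [← h.invol (f a), hc]
        exact ((hf.ran (θ v') huA).mpr ⟨a, ha, this⟩).1 rfl
      have hx2 : ∃ a', ¬ Bs a' ∧ f a' = θ (θ (f a)) := ⟨a, ha, by rw [h.invol]⟩
      have hch : hx2.choose = a := by
        apply hf.inj _ _ hx2.choose_spec.1 ha
        rw [hx2.choose_spec.2, h.invol]
      have hgw : vremap θ Bs v' f (θ (f a)) = θ a := by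
        rw [vremap_spec_pos ⟨hwB, hwv⟩ hx2, hch]
      have hx : ∃ w, (Bs w ∧ w ≠ v') ∧ vremap θ Bs v' f w = θ a := ⟨θ (f a), ⟨hwB, hwv⟩, hgw⟩
      rw [revmap_spec_pos ha hx]
      have hspec := hx.choose_spec
      have : hx.choose = θ (f a) := hgP.inj _ _ hspec.1 ⟨hwB, hwv⟩ (hspec.2.trans hgw.symm)
      rw [this, h.invol]

end Rev2

end RLP
namespace RLP
open Finset Function
open scoped Classical

variable {V : Type*} [Fintype V] [DecidableEq V]
variable {E : V → V → Prop} {θ : V → V} {Bs : V → Prop}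

section Card

variable {α : ℝ} {v' : V} {S P : Finset V} {g : V → V}

theorem rev_moved_pos (h : Refl E θ Bs) (hv' : Bs v') (hg : PB E θ Bs v' S P g) {a : V}
    (ha1 : revmap θ Bs v' g a ≠ a) (ha2 : a ∉ S) :
    ¬ Bs a ∧ (Bs (θ (revmap θ Bs v' g a)) ∧ θ (revmap θ Bs v' g a) ≠ v')
      ∧ g (θ (revmap θ Bs v' g a)) = θ a := by
  have hfP := rev_PA h hv' hg
  have ha : ¬ Bs a := fun hB => ha1 (hfP.triv a hB)
  by_cases hx : ∃ w, (Bs w ∧ w ≠ v') ∧ g w = θ a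
  · have hspec := hx.choose_spec
    have hre : revmap θ Bs v' g a = θ hx.choose := revmap_spec_pos ha hx
    rw [hre, h.invol]
    exact ⟨ha, hspec.1, hspec.2⟩
  · exact absurd (revmap_elseS h hg ha hx) ha2

theorem vre_moved_pos (h : Refl E θ Bs) (hv' : Bs v') (hg : PB E θ Bs v' S P g) {b : V}
    (hb1 : g b ≠ b) (hb2 : b ∉ P.image θ) :
    (Bs b ∧ b ≠ v') ∧ Bs (g b) ∧ revmap θ Bs v' g (θ (g b)) = θ b := by
  have hb : Bs b ∧ b ≠ v' := by
    by_contra hc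
    exact hb1 (hg.triv b hc)
  have hBgb : Bs (g b) := by
    by_contra hc
    obtain ⟨p, hp, hbp⟩ := (hg.Pdef b).mp ⟨hb.1, hb.2, hc⟩
    exact hb2 (Finset.mem_image.mpr ⟨p, hp, hbp.symm⟩)
  have ha : ¬ Bs (θ (g b)) := (h.swap' _).mpr hBgb
  have hx : ∃ w, (Bs w ∧ w ≠ v') ∧ g w = θ (θ (g b)) := ⟨b, hb, by rw [h.invol]⟩
  have hch : hx.choose = b :=
    hg.inj _ _ hx.choose_spec.1 hb (by rw [hx.choose_spec.2, h.invol])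
  exact ⟨hb, hBgb, by rw [revmap_spec_pos ha hx, hch]⟩

theorem rev_card (h : Refl E θ Bs) (hv' : Bs v') (hg : PB E θ Bs v' S P g) :
    (movedSet (revmap θ Bs v' g)).card + P.card = (movedSet g).card + S.card := by
  have hfP := rev_PA h hv' hg
  have hS_sub : S ⊆ movedSet (revmap θ Bs v' g) := by
    intro s hs
    have h1 : revmap θ Bs v' g s = θ s := hfP.Scross s hs
    simp only [movedSet, mem_filter, mem_univ, true_and]
    rw [h1]
    exact h.nofix s
  have hP_sub : P.image θ ⊆ movedSet g := by
    intro b hb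
    obtain ⟨p, hp, rfl⟩ := Finset.mem_image.mp hb
    simp only [movedSet, mem_filter, mem_univ, true_and]
    rw [hg.Pcross p hp]
    exact fun hc => h.nofix p hc.symm
  have hmid : ((movedSet (revmap θ Bs v' g)) \ S).card
      = ((movedSet g) \ P.image θ).card := by
    apply Finset.card_nbij' (fun a => θ (revmap θ Bs v' g a)) (fun b => θ (g b))
    · intro a ha
      rw [Finset.mem_coe, Finset.mem_sdiff] at ha
      obtain ⟨hmov, hnS⟩ := ha
      simp only [movedSet, mem_filter, mem_univ, true_and] at hmov
      obtain ⟨haA, ⟨hwB, hwv⟩, hgw⟩ := rev_moved_pos h hv' hg hmov hnS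
      rw [Finset.mem_coe, Finset.mem_sdiff]
      constructor
      · simp only [movedSet, mem_filter, mem_univ, true_and]
        rw [hgw]
        intro hc
        exact hmov (h.θinj hc).symm
      · intro hmem
        obtain ⟨p, hp, hpe⟩ := Finset.mem_image.mp hmem
        have hpfa : p = revmap θ Bs v' g a := h.θinj hpe
        have h1 : g (θ p) = p := hg.Pcross p hp
        rw [hpfa] at h1
        rw [hgw] at h1
        have : a = θ (revmap θ Bs v' g a) := by
          rw [← h1, h.invol]
        exact haA (this ▸ hwB)
    · intro b hb
      rw [Finset.mem_coe, Finset.mem_sdiff] at hb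
      obtain ⟨hmov, hnP⟩ := hb
      simp only [movedSet, mem_filter, mem_univ, true_and] at hmov
      obtain ⟨hbW, hBgb, hrev⟩ := vre_moved_pos h hv' hg hmov hnP
      rw [Finset.mem_coe, Finset.mem_sdiff]
      constructor
      · simp only [movedSet, mem_filter, mem_univ, true_and]
        rw [hrev]
        intro hc
        exact hmov (h.θinj hc).symm
      · intro hmem
        have hBf : Bs (revmap θ Bs v' g (θ (g b))) := ((hfP.Sdef _).mp hmem).2
        rw [hrev] at hBf
        exact ((h.swap' b).mpr hbW.1) hBf
    · intro a ha
      rw [Finset.mem_coe, Finset.mem_sdiff] at ha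
      simp only [movedSet, mem_filter, mem_univ, true_and] at ha
      obtain ⟨_, _, hgw⟩ := rev_moved_pos h hv' hg ha.1 ha.2
      beta_reduce; rw [hgw, h.invol]
    · intro b hb
      rw [Finset.mem_coe, Finset.mem_sdiff] at hb
      simp only [movedSet, mem_filter, mem_univ, true_and] at hb
      obtain ⟨_, _, hrev⟩ := vre_moved_pos h hv' hg hb.1 hb.2
      beta_reduce; rw [hrev, h.invol]
  have e1 := Finset.card_sdiff_add_card_eq_card hS_sub
  have e2 := Finset.card_sdiff_add_card_eq_card hP_sub
  have e3 : (P.image θ).card = P.card := Finset.card_image_of_injective _ (h.θinj)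
  omega

theorem rev_GB (h : Refl E θ Bs) (hv' : Bs v') (α : ℝ) :
    GB α E θ Bs v' S P
      = Real.exp (α * ((S.card : ℝ) - (P.card : ℝ))) * FA α E θ Bs (θ v') S P := by
  rw [GB, FA, Finset.mul_sum]
  refine Finset.sum_nbij' (revmap θ Bs v') (vremap θ Bs v') ?_ ?_ ?_ ?_ ?_
  · intro g hgm
    rw [Finset.mem_filter] at hgm ⊢
    exact ⟨Finset.mem_univ _, rev_PA h hv' hgm.2⟩
  · intro f hfm
    rw [Finset.mem_filter] at hfm ⊢
    exact ⟨Finset.mem_univ _, vre_PB h hv' hfm.2⟩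
  · intro g hgm
    rw [Finset.mem_filter] at hgm
    exact vre_rev h hv' hgm.2
  · intro f hfm
    rw [Finset.mem_filter] at hfm
    exact rev_vre h hv' hfm.2
  · intro g hgm
    rw [Finset.mem_filter] at hgm
    have hc := rev_card h hv' hgm.2
    rw [whalf, whalf, ← Real.exp_add]
    congr 1
    have hcast : ((movedSet (revmap θ Bs v' g)).card : ℝ) + (P.card : ℝ)
        = ((movedSet g).card : ℝ) + (S.card : ℝ) := by exact_mod_cast hc
    linear_combination α * hcast

end Card

theorem keyCS (h : Refl E θ Bs) {u v : V} (hu : ¬ Bs u) (hv : Bs v) (α : ℝ) :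
    (Zfull α E u v)^2 ≤ Zfull α E u (θ u) * Zfull α E (θ v) v := by
  have hBθu : Bs (θ u) := (h.swap u).mpr hu
  have hAθv : ¬ Bs (θ v) := (h.swap' v).mpr hv
  have hc2 : ∀ SP : Finset V × Finset V,
      Real.exp (α * ((SP.1.card : ℝ) - SP.2.card) / 2)
        * Real.exp (α * ((SP.1.card : ℝ) - SP.2.card) / 2)
      = Real.exp (α * ((SP.1.card : ℝ) - SP.2.card)) := by
    intro SP
    rw [← Real.exp_add]
    congr 1
    ring
  have hGB : ∀ (w : V), Bs w → ∀ SP : Finset V × Finset V,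
      GB α E θ Bs w SP.1 SP.2
      = Real.exp (α * ((SP.1.card : ℝ) - SP.2.card) / 2)
        * Real.exp (α * ((SP.1.card : ℝ) - SP.2.card) / 2)
        * FA α E θ Bs (θ w) SP.1 SP.2 := by
    intro w hw SP
    rw [hc2, rev_GB h hw α]
  have h1 : Zfull α E u v = ∑ SP : Finset V × Finset V,
      (Real.exp (α * ((SP.1.card : ℝ) - SP.2.card) / 2) * FA α E θ Bs u SP.1 SP.2)
      * (Real.exp (α * ((SP.1.card : ℝ) - SP.2.card) / 2) * FA α E θ Bs (θ v) SP.1 SP.2) := by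
    rw [master h hu hv]
    refine Finset.sum_congr rfl fun SP _ => ?_
    rw [hGB v hv SP]
    ring
  have h2 : Zfull α E u (θ u) = ∑ SP : Finset V × Finset V,
      (Real.exp (α * ((SP.1.card : ℝ) - SP.2.card) / 2) * FA α E θ Bs u SP.1 SP.2)^2 := by
    rw [master h hu hBθu]
    refine Finset.sum_congr rfl fun SP _ => ?_
    rw [hGB (θ u) hBθu SP, h.invol]
    ring
  have h3 : Zfull α E (θ v) v = ∑ SP : Finset V × Finset V,
      (Real.exp (α * ((SP.1.card : ℝ) - SP.2.card) / 2) * FA α E θ Bs (θ v) SP.1 SP.2)^2 := by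
    rw [master h hAθv hv]
    refine Finset.sum_congr rfl fun SP _ => ?_
    rw [hGB v hv SP]
    ring
  rw [h1, h2, h3]
  exact Finset.sum_mul_sq_le_sq_mul_sq _ _ _

end RLP
namespace RLP

section ZModFacts

variable {L : ℕ} [NeZero L]

theorem zmod_cast_val (w : ZMod L) : ((w.val : ℕ) : ZMod L) = w :=
  ZMod.natCast_rightInverse w

theorem zmod_val_neg_one (hL2 : 2 ≤ L) : ((-1 : ZMod L)).val = L - 1 := by
  have hL1 : 1 ≤ L := by omega
  have h1 : ((L - 1 : ℕ) : ZMod L) = -1 := by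
    push_cast [Nat.cast_sub hL1]
    rw [ZMod.natCast_self]
    ring
  rw [← h1, ZMod.val_natCast, Nat.mod_eq_of_lt (by omega)]

theorem zmod_val_add_one (hL2 : 2 ≤ L) (w : ZMod L) (hne : w.val ≠ L - 1) :
    (w + 1).val = w.val + 1 := by
  have h1 : (1 : ZMod L).val = 1 := by
    rw [← Nat.cast_one, ZMod.val_natCast, Nat.mod_eq_of_lt (by omega)]
  rw [ZMod.val_add, h1, Nat.mod_eq_of_lt]
  have := ZMod.val_lt w
  omega

theorem zmod_val_sub_one (hL2 : 2 ≤ L) (w : ZMod L) (h0 : w.val ≠ 0) :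
    (w - 1).val = w.val - 1 := by
  have h1 : w - 1 = w + (-1) := by ring
  rw [h1, ZMod.val_add, zmod_val_neg_one hL2]
  have hv := ZMod.val_lt w
  have h2 : w.val + (L - 1) = (w.val - 1) + L := by omega
  rw [h2, Nat.add_mod_right, Nat.mod_eq_of_lt (by omega)]

theorem zmod_val_neg_add_one (hL2 : 2 ≤ L) (w : ZMod L) :
    (-(w + 1)).val = L - 1 - w.val := by
  by_cases hw : w + 1 = 0
  · have hwe : w = -1 := by
      have := congrArg (fun t => t - 1) hw
      simpa using this
    rw [hw, neg_zero, ZMod.val_zero, hwe, zmod_val_neg_one hL2]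
    omega
  · rw [ZMod.neg_val, if_neg hw, zmod_val_add_one hL2]
    · have hv := ZMod.val_lt w
      omega
    · intro hc
      apply hw
      have hwc : w = ((L - 1 : ℕ) : ZMod L) := by rw [← hc, zmod_cast_val]
      rw [hwc]
      have hL1 : 1 ≤ L := by omega
      push_cast [Nat.cast_sub hL1]
      rw [ZMod.natCast_self]
      ring

end ZModFacts

section Geometry

variable {d L : ℕ} [NeZero L]

def θmap (z : TorusPt d L) (i : Fin d) (x : TorusPt d L) : TorusPt d L :=
  fun k => if k = i then z i - x i else x k

def BsP (z : TorusPt d L) (i : Fin d) (m : ℕ) (x : TorusPt d L) : Prop :=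
  ((x i - ((m + 1 : ℕ) : ZMod L)).val) < L / 2

theorem torusAdj_symm : ∀ x y : TorusPt d L, torusAdj x y → torusAdj y x := by
  rintro x y ⟨j, hj | hj⟩
  · refine ⟨j, Or.inr ?_⟩
    funext k
    rw [Function.update_apply]
    by_cases hk : k = j
    · subst hk
      rw [if_pos rfl, hj, Function.update_apply, if_pos rfl]
      ring
    · rw [if_neg hk, hj, Function.update_apply, if_neg hk]
  · refine ⟨j, Or.inl ?_⟩
    funext k
    rw [Function.update_apply]
    by_cases hk : k = j
    · subst hk
      rw [if_pos rfl, hj, Function.update_apply, if_pos rfl]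
      ring
    · rw [if_neg hk, hj, Function.update_apply, if_neg hk]

theorem geom_refl (hL : Even L) (z : TorusPt d L) (i : Fin d)
    {m : ℕ} (hm : (z i).val = 2 * m + 1) :
    Refl (torusAdj (d := d) (L := L)) (θmap z i) (BsP z i m) := by
  obtain ⟨K, hK⟩ := hL
  have hL0 : L ≠ 0 := NeZero.ne L
  have hK1 : 1 ≤ K := by omega
  have hL2 : 2 ≤ L := by omega
  have hn : (z i).val < L := ZMod.val_lt _
  have hmK : m + 1 ≤ K := by omega
  have hzi : z i = ((2 * m + 1 : ℕ) : ZMod L) := by rw [← hm, zmod_cast_val]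
  have h2K0 : ((K + K : ℕ) : ZMod L) = 0 := by rw [← hK]; exact ZMod.natCast_self L
  have hθpos : ∀ x : TorusPt d L,
      (θmap z i x) i - ((m + 1 : ℕ) : ZMod L)
        = -((x i - ((m + 1 : ℕ) : ZMod L)) + 1) := by
    intro x
    show (if i = i then z i - x i else x i) - _ = _
    rw [if_pos rfl, hzi]
    push_cast
    ring
  have hswap : ∀ x : TorusPt d L, BsP z i m (θmap z i x) ↔ ¬ BsP z i m x := by
    intro x
    unfold BsP
    rw [hθpos x, zmod_val_neg_add_one hL2]
    have := ZMod.val_lt (x i - ((m + 1 : ℕ) : ZMod L))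
    omega
  refine ⟨torusAdj_symm, ?_, hswap, ?_, ?_, ?_⟩
  · -- involution
    intro x
    funext k
    by_cases hk : k = i
    · subst hk
      simp [θmap]
    · simp [θmap, hk]
  · -- adjacency preserved
    rintro x y ⟨j, hj | hj⟩
    · by_cases hji : j = i
      · subst hji
        refine ⟨j, Or.inr ?_⟩
        funext k
        rw [Function.update_apply]
        have hy : y j = x j + 1 := by rw [hj, Function.update_apply, if_pos rfl]
        by_cases hk : k = j
        · subst hk
          rw [if_pos rfl]
          simp only [θmap, eq_self_iff_true, if_true]
          rw [hy]
          ring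
        · rw [if_neg hk]
          have hyk : y k = x k := by rw [hj, Function.update_apply, if_neg hk]
          simp [θmap, hk, hyk]
      · refine ⟨j, Or.inl ?_⟩
        funext k
        rw [Function.update_apply]
        have hyi : y i = x i := by
          rw [hj, Function.update_apply, if_neg (fun hc : i = j => hji hc.symm)]
        by_cases hk : k = j
        · subst hk
          rw [if_pos rfl]
          have hy : y k = x k + 1 := by rw [hj, Function.update_apply, if_pos rfl]
          simp [θmap, hji, hy]
        · rw [if_neg hk]
          have hyk : y k = x k := by rw [hj, Function.update_apply, if_neg hk]
          by_cases hki : k = i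
          · subst hki
            simp [θmap, hyi]
          · simp [θmap, hki, hyk]
    · by_cases hji : j = i
      · subst hji
        refine ⟨j, Or.inl ?_⟩
        funext k
        rw [Function.update_apply]
        have hy : y j = x j - 1 := by rw [hj, Function.update_apply, if_pos rfl]
        by_cases hk : k = j
        · subst hk
          rw [if_pos rfl]
          simp only [θmap, eq_self_iff_true, if_true]
          rw [hy]
          ring
        · rw [if_neg hk]
          have hyk : y k = x k := by rw [hj, Function.update_apply, if_neg hk]
          simp [θmap, hk, hyk]
      · refine ⟨j, Or.inr ?_⟩
        funext k
        rw [Function.update_apply]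
        have hyi : y i = x i := by
          rw [hj, Function.update_apply, if_neg (fun hc : i = j => hji hc.symm)]
        by_cases hk : k = j
        · subst hk
          rw [if_pos rfl]
          have hy : y k = x k - 1 := by rw [hj, Function.update_apply, if_pos rfl]
          simp [θmap, hji, hy]
        · rw [if_neg hk]
          have hyk : y k = x k := by rw [hj, Function.update_apply, if_neg hk]
          by_cases hki : k = i
          · subst hki
            simp [θmap, hyi]
          · simp [θmap, hki, hyk]
  · -- cross
    rintro x y ⟨j, hj⟩ hx hy
    by_cases hji : j = i
    case neg =>
      exfalso
      apply hy
      have hyi : y i = x i := by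
        rcases hj with hj | hj <;>
          rw [hj, Function.update_apply, if_neg (fun hc : i = j => hji hc.symm)]
      unfold BsP at hx ⊢
      rw [hyi]
      exact hx
    subst hji
    rcases hj with hj | hj
    · -- +1 case, j = i
      have hy' : y j = x j + 1 := by rw [hj, Function.update_apply, if_pos rfl]
      have hypos : y j - ((m + 1 : ℕ) : ZMod L)
          = (x j - ((m + 1 : ℕ) : ZMod L)) + 1 := by rw [hy']; ring
      unfold BsP at hx hy
      rw [hypos] at hy
      by_cases hwtop : (x j - ((m + 1 : ℕ) : ZMod L)).val = L - 1
      · exfalso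
        have hzero : (x j - ((m + 1 : ℕ) : ZMod L)) + 1 = 0 := by
          have hw : x j - ((m + 1 : ℕ) : ZMod L) = ((L - 1 : ℕ) : ZMod L) := by
            rw [← hwtop, zmod_cast_val]
          rw [hw]
          push_cast [Nat.cast_sub (by omega : 1 ≤ L)]
          rw [ZMod.natCast_self]
          ring
        rw [hzero, ZMod.val_zero] at hy
        omega
      · rw [zmod_val_add_one hL2 _ hwtop] at hy
        have hKm1 : (x j - ((m + 1 : ℕ) : ZMod L)).val = K - 1 := by omega
        have hxj : x j = ((m + K : ℕ) : ZMod L) := by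
          have h1 : x j = ((m + 1 : ℕ) : ZMod L) + (x j - ((m + 1 : ℕ) : ZMod L)) := by
            ring
          rw [h1, ← zmod_cast_val (x j - ((m + 1 : ℕ) : ZMod L)), hKm1]
          push_cast [Nat.cast_sub hK1]
          ring
        funext k
        by_cases hk : k = j
        · subst hk
          rw [hj, Function.update_apply, if_pos rfl]
          show x k + 1 = if k = k then z k - x k else x k
          rw [if_pos rfl, hzi, hxj]
          push_cast at h2K0 ⊢
          linear_combination h2K0
        · rw [hj, Function.update_apply, if_neg hk]
          show x k = if k = j then _ else x k
          rw [if_neg hk]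
    · -- -1 case, j = i
      have hy' : y j = x j - 1 := by rw [hj, Function.update_apply, if_pos rfl]
      have hypos : y j - ((m + 1 : ℕ) : ZMod L)
          = (x j - ((m + 1 : ℕ) : ZMod L)) - 1 := by rw [hy']; ring
      unfold BsP at hx hy
      rw [hypos] at hy
      by_cases hw0 : (x j - ((m + 1 : ℕ) : ZMod L)).val = 0
      · have hweq : x j - ((m + 1 : ℕ) : ZMod L) = 0 := (ZMod.val_eq_zero _).mp hw0
        have hxj : x j = ((m + 1 : ℕ) : ZMod L) := by
          have := sub_eq_zero.mp hweq
          exact this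
        funext k
        by_cases hk : k = j
        · subst hk
          rw [hj, Function.update_apply, if_pos rfl]
          show x k - 1 = if k = k then z k - x k else x k
          rw [if_pos rfl, hzi, hxj]
          push_cast
          ring
        · rw [hj, Function.update_apply, if_neg hk]
          show x k = if k = j then _ else x k
          rw [if_neg hk]
      · exfalso
        rw [zmod_val_sub_one hL2 _ hw0] at hy
        omega
  · -- no fixed point
    intro x hc
    have h1 := congrFun hc i
    simp only [θmap, eq_self_iff_true, if_true] at h1
    have h2 : z i = x i + x i := by linear_combination h1
    have h3 := congrArg ZMod.val h2
    rw [ZMod.val_add, hm] at h3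
    set v := (x i).val with hv
    have h8 : L = 2 * K := by omega
    have h9 : (v + v) % L = 2 * (v % K) := by
      have hvv : v + v = 2 * v := by ring
      rw [hvv, h8, Nat.mul_mod_mul_left]
    rw [h9] at h3
    omega

theorem geom_facts (hL : Even L) (z : TorusPt d L) (i : Fin d) {m : ℕ}
    (hm : (z i).val = 2 * m + 1) :
    BsP z i m z ∧ ¬ BsP z i m (torusOrigin d L)
    ∧ θmap z i (torusOrigin d L) = (fun k => if k = i then z i else 0)
    ∧ z - θmap z i z = (fun k => if k = i then z i else 0) := by
  obtain ⟨K, hK⟩ := hL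
  have hL0 : L ≠ 0 := NeZero.ne L
  have hK1 : 1 ≤ K := by omega
  have hL2 : 2 ≤ L := by omega
  have hn : (z i).val < L := ZMod.val_lt _
  have hmK : m + 1 ≤ K := by omega
  have hzi : z i = ((2 * m + 1 : ℕ) : ZMod L) := by rw [← hm, zmod_cast_val]
  refine ⟨?_, ?_, ?_, ?_⟩
  · unfold BsP
    have h1 : z i - ((m + 1 : ℕ) : ZMod L) = ((m : ℕ) : ZMod L) := by
      rw [hzi]
      push_cast
      ring
    rw [h1, ZMod.val_natCast, Nat.mod_eq_of_lt (by omega)]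
    omega
  · unfold BsP
    have h1 : (torusOrigin d L) i - ((m + 1 : ℕ) : ZMod L)
        = -(((m : ℕ) : ZMod L) + 1) := by
      show (0 : ZMod L) - _ = _
      push_cast
      ring
    rw [h1, zmod_val_neg_add_one hL2, ZMod.val_natCast, Nat.mod_eq_of_lt (by omega)]
    omega
  · funext k
    by_cases hk : k = i
    · subst hk
      simp [θmap, torusOrigin]
    · simp [θmap, torusOrigin, hk]
  · funext k
    by_cases hk : k = i
    · subst hk
      simp [θmap, Pi.sub_apply]
    · simp [θmap, Pi.sub_apply, hk]

end Geometry

end RLP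
namespace RLP
open Finset Function
open scoped Classical

variable {d L : ℕ} [NeZero L]

theorem update_add (x c : TorusPt d L) (j : Fin d) (e : ZMod L) :
    Function.update x j (x j + e) + c = Function.update (x + c) j ((x + c) j + e) := by
  funext k
  rw [Pi.add_apply, Function.update_apply, Function.update_apply]
  by_cases hk : k = j
  · subst hk
    rw [if_pos rfl, if_pos rfl]
    simp only [Pi.add_apply]
    ring
  · rw [if_neg hk, if_neg hk, Pi.add_apply]

theorem torusAdj_translate (c : TorusPt d L) {x y : TorusPt d L} (h : torusAdj x y) :
    torusAdj (x + c) (y + c) := by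
  obtain ⟨j, hj | hj⟩ := h
  · refine ⟨j, Or.inl ?_⟩
    rw [hj, update_add]
  · refine ⟨j, Or.inr ?_⟩
    have h1 : Function.update x j (x j - 1) = Function.update x j (x j + (-1)) := by
      rw [sub_eq_add_neg]
    rw [hj, h1, update_add, ← sub_eq_add_neg]

theorem Zfull_translate (α : ℝ) (c x y : TorusPt d L) :
    Zfull α torusAdj (x + c) (y + c) = Zfull α torusAdj x y := by
  rw [Zfull, Zfull]
  refine Finset.sum_nbij' (fun π => fun w => π (w + c) - c)
    (fun σ => fun w => σ (w - c) + c) ?_ ?_ ?_ ?_ ?_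
  · intro π hπ
    rw [Finset.mem_filter] at hπ ⊢
    obtain ⟨_, hbij, hval, hnb⟩ := hπ
    refine ⟨Finset.mem_univ _, ?_, ?_, ?_⟩
    · have hinj : Function.Injective (fun w => π (w + c) - c) := by
        intro w1 w2 he
        simp only at he
        have := hbij.injective (by
          have := congrArg (fun t => t + c) he
          simpa using this)
        simpa using congrArg (fun t => t - c) this
      exact Finite.injective_iff_bijective.mp hinj
    · show π (y + c) - c = x
      rw [hval]
      simp
    · intro w hw
      have hw' : w + c ≠ y + c := fun hc => hw (by simpa using congrArg (fun t => t - c) hc)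
      rcases hnb (w + c) hw' with h1 | h1
      · left
        show π (w + c) - c = w
        rw [h1]
        simp
      · right
        have h2 := torusAdj_translate (-c) h1
        simpa [sub_eq_add_neg] using h2
  · intro σ hσ
    rw [Finset.mem_filter] at hσ ⊢
    obtain ⟨_, hbij, hval, hnb⟩ := hσ
    refine ⟨Finset.mem_univ _, ?_, ?_, ?_⟩
    · have hinj : Function.Injective (fun w => σ (w - c) + c) := by
        intro w1 w2 he
        simp only at he
        have := hbij.injective (by
          have := congrArg (fun t => t - c) he
          simpa using this)
        simpa using congrArg (fun t => t + c) this
      exact Finite.injective_iff_bijective.mp hinj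
    · show σ (y + c - c) + c = x + c
      rw [show y + c - c = y by simp, hval]
    · intro w hw
      have hw' : w - c ≠ y := fun hc => hw (by rw [← hc]; simp)
      rcases hnb (w - c) hw' with h1 | h1
      · left
        show σ (w - c) + c = w
        rw [h1]
        simp
      · right
        have h2 := torusAdj_translate c h1
        simpa [sub_add_cancel] using h2
  · intro π _
    funext w
    simp
  · intro σ _
    funext w
    simp
  · intro π hπ
    show Real.exp (-α * ((Finset.univ.filter (fun w => w ≠ y + c ∧ π w ≠ w)).card : ℝ))
      = Real.exp (-α * ((Finset.univ.filter
          (fun w : TorusPt d L => w ≠ y ∧ π (w + c) - c ≠ w)).card : ℝ))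
    have hcards : (Finset.univ.filter (fun w => w ≠ y + c ∧ π w ≠ w)).card
        = (Finset.univ.filter (fun w : TorusPt d L => w ≠ y ∧ π (w + c) - c ≠ w)).card := by
      refine Finset.card_nbij' (fun w => w - c) (fun w => w + c) ?_ ?_ ?_ ?_
      · intro w hw
        rw [Finset.mem_coe, Finset.mem_filter] at hw ⊢
        obtain ⟨_, hw1, hw2⟩ := hw
        refine ⟨Finset.mem_univ _, ?_, ?_⟩
        · intro hc
          simp only [] at hc
          exact hw1 (by rw [← hc, sub_add_cancel])
        · show π (w - c + c) - c ≠ w - c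
          rw [sub_add_cancel]
          intro hc
          exact hw2 (by rw [← sub_add_cancel (π w) c, hc, sub_add_cancel])
      · intro w hw
        rw [Finset.mem_coe, Finset.mem_filter] at hw ⊢
        obtain ⟨_, hw1, hw2⟩ := hw
        refine ⟨Finset.mem_univ _, ?_, ?_⟩
        · intro hc
          simp only [] at hc
          have := congrArg (fun t => t - c) hc
          simp only [add_sub_cancel_right] at this
          exact hw1 this
        · intro hc
          apply hw2
          show π (w + c) - c = w
          rw [hc]
          simp
      · intro w _
        simp
      · intro w _
        simp
    rw [hcards]

theorem Zfull_nonneg (α : ℝ) (E : TorusPt d L → TorusPt d L → Prop) (x y : TorusPt d L) :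
    0 ≤ Zfull α E x y :=
  Finset.sum_nonneg fun _ _ => le_of_lt (Real.exp_pos _)

theorem Zperm0_pos (α : ℝ) : 0 < Zperm0 d L α := by
  rw [Zperm0]
  apply Finset.sum_pos'
  · intro π _
    split
    · exact le_of_lt (Real.exp_pos _)
    · exact le_refl _
  · refine ⟨1, Finset.mem_univ _, ?_⟩
    have hcond : ∀ w : TorusPt d L, (1 : Equiv.Perm (TorusPt d L)) w = w ∨
        torusAdj w ((1 : Equiv.Perm (TorusPt d L)) w) := fun w => Or.inl rfl
    rw [if_pos hcond]
    exact Real.exp_pos _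

theorem Zperm2_eq_Zfull (α : ℝ) (x y : TorusPt d L) (hxy : x ≠ y) :
    Zperm2 d L α x y = Zfull α torusAdj x y := by
  rw [Zperm2, Zfull, ← Finset.sum_filter]
  refine Finset.sum_bij'
    (fun π' _ => (fun w => if h : w = y then x else (π' ⟨w, h⟩ : TorusPt d L)))
    (fun π hπ => (fun w => ⟨π (w : TorusPt d L), by
      rw [Finset.mem_filter] at hπ
      obtain ⟨_, hbij, hval, _⟩ := hπ
      intro hc
      exact w.2 (hbij.injective (hc.trans hval.symm))⟩))
    ?_ ?_ ?_ ?_ ?_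
  · -- maps into
    intro π' hπ'
    rw [Finset.mem_filter] at hπ' ⊢
    obtain ⟨_, hbij, hnb⟩ := hπ'
    refine ⟨Finset.mem_univ _, ?_, by simp, ?_⟩
    · have hinj : Function.Injective
          (fun w => if h : w = y then x else (π' ⟨w, h⟩ : TorusPt d L)) := by
        intro a b he
        simp only at he
        by_cases ha : a = y
        · by_cases hb : b = y
          · rw [ha, hb]
          · rw [dif_pos ha, dif_neg hb] at he
            exact absurd he.symm (π' ⟨b, hb⟩).2
        · by_cases hb : b = y
          · rw [dif_neg ha, dif_pos hb] at he
            exact absurd he (π' ⟨a, ha⟩).2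
          · rw [dif_neg ha, dif_neg hb] at he
            exact congrArg Subtype.val (hbij.injective (Subtype.ext he))
      exact Finite.injective_iff_bijective.mp hinj
    · intro w hw
      simp only []
      rw [dif_neg hw]
      exact hnb ⟨w, hw⟩
  · -- reverse maps into
    intro π hπ
    have hπ' := hπ
    rw [Finset.mem_filter] at hπ'
    obtain ⟨_, hbij, hval, hnb⟩ := hπ'
    rw [Finset.mem_filter]
    refine ⟨Finset.mem_univ _, ?_, ?_⟩
    · rw [Fintype.bijective_iff_injective_and_card]
      constructor
      · intro a b he
        have : π (a : TorusPt d L) = π (b : TorusPt d L) := congrArg Subtype.val he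
        exact Subtype.ext (hbij.injective this)
      · have h1 : Fintype.card {w : TorusPt d L // w ≠ y} = Fintype.card (TorusPt d L) - 1 := by
          rw [Fintype.card_subtype_compl, Fintype.card_subtype_eq]
        have h2 : Fintype.card {w : TorusPt d L // w ≠ x} = Fintype.card (TorusPt d L) - 1 := by
          rw [Fintype.card_subtype_compl, Fintype.card_subtype_eq]
        rw [h1, h2]
    · intro w
      exact hnb (w : TorusPt d L) w.2
  · -- left inverse
    intro π' hπ'
    funext w
    apply Subtype.ext
    show (if h : (w : TorusPt d L) = y then x else (π' ⟨(w : TorusPt d L), h⟩ : TorusPt d L))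
      = (π' w : TorusPt d L)
    rw [dif_neg w.2]
  · -- right inverse
    intro π hπ
    rw [Finset.mem_filter] at hπ
    obtain ⟨_, _, hval, _⟩ := hπ
    funext w
    simp only []
    by_cases hw : w = y
    · rw [dif_pos hw, hw, hval]
    · rw [dif_neg hw]
  · -- weights
    intro π' hπ'
    have hcards : (Finset.univ.filter
          (fun a : {w : TorusPt d L // w ≠ y} => (π' a : TorusPt d L) ≠ (a : TorusPt d L))).card
        = (Finset.univ.filter (fun w : TorusPt d L => w ≠ y ∧
            (if h : w = y then x else (π' ⟨w, h⟩ : TorusPt d L)) ≠ w)).card := by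
      refine Finset.card_nbij' (fun a => (a : TorusPt d L))
        (fun w => if h : w = y then ⟨x, hxy⟩ else ⟨w, h⟩) ?_ ?_ ?_ ?_
      · intro a ha
        rw [Finset.mem_coe, Finset.mem_filter] at ha ⊢
        refine ⟨Finset.mem_univ _, a.2, ?_⟩
        rw [dif_neg a.2]
        exact ha.2
      · intro w hw
        rw [Finset.mem_coe, Finset.mem_filter] at hw ⊢
        obtain ⟨_, hw1, hw2⟩ := hw
        rw [dif_neg hw1] at hw2
        refine ⟨Finset.mem_univ _, ?_⟩
        simp only [dif_neg hw1]
        exact hw2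
      · intro a ha
        simp only [dif_neg a.2]
      · intro w hw
        rw [Finset.mem_coe, Finset.mem_filter] at hw
        simp only [dif_neg hw.2.1]
    simp only [wfull]
    congr 2
    exact_mod_cast hcards

end RLP
/-- **Site-monotonicity for random lattice permutations (projection onto an axis).**
For every `z ∈ T_L` and direction `i` with `z_i` odd, the two-point function
`G^{per}(x,y) = Z^{per}(x,y)/Z^{per}(∅)` satisfies
`G^{per}(o, z) ≤ G^{per}(o, z_i e_i)`. -/
theorem perm_two_point_le_axis_projection
    (d L : ℕ) [NeZero L] (hd : 2 ≤ d) (hL : Even L) (α : ℝ)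
    (z : TorusPt d L) (i : Fin d) (hodd : Odd (z i).val) :
    Zperm2 d L α (torusOrigin d L) z / Zperm0 d L α ≤
      Zperm2 d L α (torusOrigin d L) (fun k : Fin d => if k = i then z i else 0) /
        Zperm0 d L α := by
  classical
  obtain ⟨m, hm⟩ := hodd
  have hrefl := RLP.geom_refl hL z i hm
  obtain ⟨hBz, hAo, hθo, hsub⟩ := RLP.geom_facts hL z i hm
  set pt : TorusPt d L := (fun k : Fin d => if k = i then z i else 0) with hpt
  have hzne : z i ≠ 0 := by
    intro hc
    rw [hc, ZMod.val_zero] at hm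
    omega
  have hoz : torusOrigin d L ≠ z := by
    intro hc
    apply hAo
    rw [hc]
    exact hBz
  have hopt : torusOrigin d L ≠ pt := by
    intro hc
    have h1 := congrFun hc i
    simp only [torusOrigin, hpt, if_pos rfl] at h1
    exact hzne h1.symm
  have hkey := RLP.keyCS hrefl hAo hBz α
  rw [hθo] at hkey
  have htrans : RLP.Zfull α torusAdj (RLP.θmap z i z) z
      = RLP.Zfull α torusAdj (torusOrigin d L) pt := by
    have h1 := RLP.Zfull_translate α (RLP.θmap z i z) (torusOrigin d L) pt
    have h2 : torusOrigin d L + RLP.θmap z i z = RLP.θmap z i z := by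
      funext k
      simp [torusOrigin]
    have h3 : pt + RLP.θmap z i z = z := by
      rw [← hsub]
      exact sub_add_cancel z (RLP.θmap z i z)
    rw [h2, h3] at h1
    exact h1
  rw [htrans] at hkey
  have hnn1 := RLP.Zfull_nonneg (d := d) (L := L) α torusAdj (torusOrigin d L) z
  have hnn2 := RLP.Zfull_nonneg (d := d) (L := L) α torusAdj (torusOrigin d L) pt
  have hle : RLP.Zfull α torusAdj (torusOrigin d L) z
      ≤ RLP.Zfull α torusAdj (torusOrigin d L) pt := by
    by_contra hlt
    push_neg at hlt
    have h4 : RLP.Zfull α torusAdj (torusOrigin d L) pt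
          * RLP.Zfull α torusAdj (torusOrigin d L) pt
        < RLP.Zfull α torusAdj (torusOrigin d L) z ^ 2 := by
      rw [sq]
      exact mul_lt_mul' (le_of_lt hlt) hlt hnn2 (lt_of_le_of_lt hnn2 hlt)
    linarith
  rw [RLP.Zperm2_eq_Zfull α _ z hoz, RLP.Zperm2_eq_Zfull α _ pt hopt]
  have hZ0 := RLP.Zperm0_pos (d := d) (L := L) α
  gcongr
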